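/- arXiv:2103.10083 — 3 statements merged into one kernel-verified Lean document; each statement's English description precedes it below -/
import Mathlib

section
/- Let F, g : [0,S] → ℝ be continuous nonnegative functions, σ² ≥ 0, and K ≥ 0 a constant, such that F(t) ≤ 2σ² ∫₀ᵗ F(s) ds + ∫₀ᵗ g(s) √(2 F(s)) ds + K for all t ∈ [0,S]. Then √(F(t)) ≤ (1/√2) ∫₀ᵗ exp(σ²(t−s)) g(s) ds + exp(σ² t) √K for all t ∈ [0,S]. -/
open intervalIntegral Real Set

private lemma ftc (f : ℝ → ℝ) (hf : Continuous f) (t : ℝ) :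
    HasDerivAt (fun u => ∫ x in (0:ℝ)..u, f x) (f t) t :=
  intervalIntegral.integral_hasDerivAt_right (hf.intervalIntegrable 0 t)
    (hf.stronglyMeasurable.stronglyMeasurableAtFilter) hf.continuousAt

private lemma aux4 (S σ2 K : ℝ) (hS : 0 ≤ S) (hσ : 0 ≤ σ2) (hK : 0 < K) (F g : ℝ → ℝ)
    (hF : Continuous F) (hg : Continuous g)
    (hFpos : ∀ t ∈ Set.Icc (0:ℝ) S, 0 ≤ F t)
    (hgpos : ∀ t ∈ Set.Icc (0:ℝ) S, 0 ≤ g t)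
    (hineq : ∀ t ∈ Set.Icc (0:ℝ) S,
      F t ≤ 2 * σ2 * (∫ s in (0:ℝ)..t, F s) + (∫ s in (0:ℝ)..t, g s * Real.sqrt (2 * F s)) + K) :
    ∀ t ∈ Set.Icc (0:ℝ) S,
      Real.sqrt (F t) ≤ (1 / Real.sqrt 2) * (∫ s in (0:ℝ)..t, Real.exp (σ2 * (t - s)) * g s)
        + Real.exp (σ2 * t) * Real.sqrt K := by
  have h2 : Real.sqrt 2 * Real.sqrt 2 = 2 := Real.mul_self_sqrt (by norm_num)
  have h2pos : (0:ℝ) < Real.sqrt 2 := Real.sqrt_pos.mpr (by norm_num)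
  set G : ℝ → ℝ := fun s => g s * Real.sqrt (2 * F s) with hGdef
  have hGc : Continuous G := hg.mul ((continuous_const.mul hF).sqrt)
  set ψ : ℝ → ℝ := fun t => 2 * σ2 * (∫ s in (0:ℝ)..t, F s) + (∫ s in (0:ℝ)..t, G s) + K
    with hψdef
  have hψd : ∀ t, HasDerivAt ψ (2 * σ2 * F t + G t) t := fun t =>
    (((ftc F hF t).const_mul (2 * σ2)).add (ftc G hGc t)).add_const K
  have hψpos : ∀ t ∈ Set.Icc (0:ℝ) S, 0 < ψ t := by
    intro t ht
    have h1 : 0 ≤ ∫ s in (0:ℝ)..t, F s :=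
      intervalIntegral.integral_nonneg ht.1 (fun s hs => hFpos s ⟨hs.1, hs.2.trans ht.2⟩)
    have h2 : 0 ≤ ∫ s in (0:ℝ)..t, G s :=
      intervalIntegral.integral_nonneg ht.1 (fun s hs =>
        mul_nonneg (hgpos s ⟨hs.1, hs.2.trans ht.2⟩) (Real.sqrt_nonneg _))
    have : 0 ≤ 2 * σ2 := by linarith
    simp only [hψdef]
    nlinarith
  have hFψ : ∀ t ∈ Set.Icc (0:ℝ) S, F t ≤ ψ t := fun t ht => hineq t ht
  set u : ℝ → ℝ := fun t => Real.sqrt (ψ t) with hudef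
  have hud : ∀ t ∈ Set.Icc (0:ℝ) S,
      HasDerivAt u ((2 * σ2 * F t + G t) / (2 * Real.sqrt (ψ t))) t := fun t ht =>
    (hψd t).sqrt (ne_of_gt (hψpos t ht))
  have hubound : ∀ t ∈ Set.Icc (0:ℝ) S,
      (2 * σ2 * F t + G t) / (2 * Real.sqrt (ψ t)) ≤ σ2 * u t + g t / Real.sqrt 2 := by
    intro t ht
    have hψt := hψpos t ht
    have hs : 0 < Real.sqrt (ψ t) := Real.sqrt_pos.mpr hψt
    have hsq : Real.sqrt (ψ t) * Real.sqrt (ψ t) = ψ t := Real.mul_self_sqrt hψt.le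
    have hFle : F t ≤ ψ t := hFψ t ht
    have hGle : G t ≤ g t * (Real.sqrt 2 * Real.sqrt (ψ t)) := by
      have : Real.sqrt (2 * F t) ≤ Real.sqrt (2 * ψ t) :=
        Real.sqrt_le_sqrt (by linarith)
      have h' : Real.sqrt (2 * ψ t) = Real.sqrt 2 * Real.sqrt (ψ t) :=
        Real.sqrt_mul (by norm_num) _
      calc G t = g t * Real.sqrt (2 * F t) := rfl
        _ ≤ g t * Real.sqrt (2 * ψ t) := by
            exact mul_le_mul_of_nonneg_left this (hgpos t ht)
        _ = g t * (Real.sqrt 2 * Real.sqrt (ψ t)) := by rw [h']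
    rw [div_le_iff₀ (by positivity)]
    have hu : u t = Real.sqrt (ψ t) := rfl
    have hgt : 0 ≤ g t := hgpos t ht
    have h1 : 2 * σ2 * F t ≤ 2 * σ2 * ψ t := by nlinarith
    -- RHS * (2 * sqrt ψ) = 2 σ2 ψ + g t * sqrt2 * sqrt ψ * ... compute
    have key : (σ2 * u t + g t / Real.sqrt 2) * (2 * Real.sqrt (ψ t))
        = 2 * σ2 * ψ t + g t * (Real.sqrt 2 * Real.sqrt (ψ t)) := by
      rw [hu]
      field_simp
      linear_combination (2 * σ2 * Real.sqrt 2) * hsq - (g t * Real.sqrt (ψ t)) * h2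
    rw [key]
    linarith
  have hAc : Continuous (fun s => Real.exp (-σ2 * s) * g s) :=
    ((continuous_const.mul continuous_id).rexp).mul hg
  set A : ℝ → ℝ := fun t => ∫ s in (0:ℝ)..t, Real.exp (-σ2 * s) * g s with hAdef
  set w : ℝ → ℝ := fun t => Real.exp (-σ2 * t) * u t - (1 / Real.sqrt 2) * A t with hwdef
  have hed : ∀ t : ℝ, HasDerivAt (fun t => Real.exp (-σ2 * t)) (-σ2 * Real.exp (-σ2 * t)) t := by
    intro t
    have := ((hasDerivAt_id t).const_mul (-σ2)).exp
    simpa [mul_comm] using this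
  have hwd : ∀ t ∈ Set.Icc (0:ℝ) S, HasDerivAt w
      ((-σ2 * Real.exp (-σ2 * t)) * u t
        + Real.exp (-σ2 * t) * ((2 * σ2 * F t + G t) / (2 * Real.sqrt (ψ t)))
        - (1 / Real.sqrt 2) * (Real.exp (-σ2 * t) * g t)) t := by
    intro t ht
    exact ((hed t).mul (hud t ht)).sub ((ftc _ hAc t).const_mul (1 / Real.sqrt 2))
  have hw' : ∀ t ∈ Set.Icc (0:ℝ) S,
      (-σ2 * Real.exp (-σ2 * t)) * u t
        + Real.exp (-σ2 * t) * ((2 * σ2 * F t + G t) / (2 * Real.sqrt (ψ t)))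
        - (1 / Real.sqrt 2) * (Real.exp (-σ2 * t) * g t) ≤ 0 := by
    intro t ht
    have hb := hubound t ht
    have he : (0:ℝ) < Real.exp (-σ2 * t) := Real.exp_pos _
    have hgd : g t / Real.sqrt 2 = (1 / Real.sqrt 2) * g t := by ring
    nlinarith [mul_le_mul_of_nonneg_left hb he.le]
  have hanti : AntitoneOn w (Set.Icc (0:ℝ) S) := by
    apply antitoneOn_of_deriv_nonpos (convex_Icc 0 S)
    · exact fun t ht => (hwd t ht).continuousAt.continuousWithinAt
    · intro t ht
      rw [interior_Icc] at ht
      exact (hwd t (Set.Ioo_subset_Icc_self ht)).differentiableAt.differentiableWithinAt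
    · intro t ht
      rw [interior_Icc] at ht
      rw [(hwd t (Set.Ioo_subset_Icc_self ht)).deriv]
      exact hw' t (Set.Ioo_subset_Icc_self ht)
  intro t ht
  have hw0 : w 0 = Real.sqrt K := by
    simp [hwdef, hAdef, hudef, hψdef]
  have hle : w t ≤ Real.sqrt K := by
    rw [← hw0]
    exact hanti ⟨le_refl 0, hS⟩ ht ht.1
  have hexp : Real.exp (σ2 * t) * Real.exp (-σ2 * t) = 1 := by
    rw [← Real.exp_add]
    simp
  have hA : (∫ s in (0:ℝ)..t, Real.exp (σ2 * (t - s)) * g s) = Real.exp (σ2 * t) * A t := by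
    rw [hAdef, ← intervalIntegral.integral_const_mul]
    apply intervalIntegral.integral_congr
    intro s _
    dsimp only
    rw [← mul_assoc, ← Real.exp_add]
    congr 1
    ring
  have h3 : Real.exp (σ2 * t) * (Real.exp (-σ2 * t) * u t - (1 / Real.sqrt 2) * A t)
      ≤ Real.exp (σ2 * t) * Real.sqrt K :=
    mul_le_mul_of_nonneg_left hle (Real.exp_pos _).le
  have hring : Real.exp (σ2 * t) * (Real.exp (-σ2 * t) * u t - 1 / Real.sqrt 2 * A t)
      = (Real.exp (σ2 * t) * Real.exp (-σ2 * t)) * u t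
        - 1 / Real.sqrt 2 * (Real.exp (σ2 * t) * A t) := by ring
  rw [hring, hexp, one_mul] at h3
  have h4 : u t ≤ (1 / Real.sqrt 2) * (Real.exp (σ2 * t) * A t)
      + Real.exp (σ2 * t) * Real.sqrt K := by linarith
  have h5 : Real.sqrt (F t) ≤ u t := Real.sqrt_le_sqrt (hFψ t ht)
  rw [hA]
  linarith

theorem stmt_4 (S σ2 K : ℝ) (hS : 0 ≤ S) (hσ : 0 ≤ σ2) (hK : 0 ≤ K) (F g : ℝ → ℝ)
    (hF : Continuous F) (hg : Continuous g)
    (hFpos : ∀ t ∈ Set.Icc (0:ℝ) S, 0 ≤ F t)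
    (hgpos : ∀ t ∈ Set.Icc (0:ℝ) S, 0 ≤ g t)
    (hineq : ∀ t ∈ Set.Icc (0:ℝ) S,
      F t ≤ 2 * σ2 * (∫ s in (0:ℝ)..t, F s) + (∫ s in (0:ℝ)..t, g s * Real.sqrt (2 * F s)) + K) :
    ∀ t ∈ Set.Icc (0:ℝ) S,
      Real.sqrt (F t) ≤ (1 / Real.sqrt 2) * (∫ s in (0:ℝ)..t, Real.exp (σ2 * (t - s)) * g s)
        + Real.exp (σ2 * t) * Real.sqrt K := by
  intro t ht
  set I : ℝ := ∫ s in (0:ℝ)..t, Real.exp (σ2 * (t - s)) * g s with hI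
  have key : ∀ ε > (0:ℝ), Real.sqrt (F t)
      ≤ (1 / Real.sqrt 2) * I + Real.exp (σ2 * t) * Real.sqrt (K + ε) := by
    intro ε hε
    exact aux4 S σ2 (K + ε) hS hσ (by linarith) F g hF hg hFpos hgpos
      (fun s hs => by have := hineq s hs; linarith) t ht
  have hc : Continuous fun ε : ℝ => (1 / Real.sqrt 2) * I
      + Real.exp (σ2 * t) * Real.sqrt (K + ε) :=
    continuous_const.add (continuous_const.mul ((continuous_const.add continuous_id).sqrt))
  have htend : Filter.Tendsto
      (fun ε : ℝ => (1 / Real.sqrt 2) * I + Real.exp (σ2 * t) * Real.sqrt (K + ε))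
      (nhdsWithin 0 (Set.Ioi 0))
      (nhds ((1 / Real.sqrt 2) * I + Real.exp (σ2 * t) * Real.sqrt K)) := by
    have h0 := (hc.tendsto 0).mono_left (nhdsWithin_le_nhds (s := Set.Ioi (0:ℝ)))
    simpa using h0
  refine ge_of_tendsto htend ?_
  filter_upwards [self_mem_nhdsWithin] with ε hε
  exact key ε hε
end

section
/- Let F, g : [0,S] → ℝ be continuous nonnegative functions and K ≥ 0 a constant such that F(t) ≤ ∫₀ᵗ g(s) √(2 F(s)) ds + K for all t ∈ [0,S]. Then √(F(t)) ≤ (1/√2) ∫₀ᵗ g(s) ds + √K for all t ∈ [0,S]. -/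
open intervalIntegral Set

lemma key_5 (S K : ℝ) (hS : 0 ≤ S) (hK : 0 < K) (F g : ℝ → ℝ)
    (hF : Continuous F) (hg : Continuous g)
    (hFpos : ∀ t ∈ Set.Icc (0:ℝ) S, 0 ≤ F t)
    (hgpos : ∀ t ∈ Set.Icc (0:ℝ) S, 0 ≤ g t)
    (hineq : ∀ t ∈ Set.Icc (0:ℝ) S,
      F t ≤ (∫ s in (0:ℝ)..t, g s * Real.sqrt (2 * F s)) + K) :
    ∀ t ∈ Set.Icc (0:ℝ) S,
      Real.sqrt (F t) ≤ (1 / Real.sqrt 2) * (∫ s in (0:ℝ)..t, g s) + Real.sqrt K := by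
  set G : ℝ → ℝ := fun t => (∫ s in (0:ℝ)..t, g s * Real.sqrt (2 * F s)) + K with hGdef
  have hcont : Continuous fun s => g s * Real.sqrt (2 * F s) := by
    exact hg.mul ((Real.continuous_sqrt).comp (continuous_const.mul hF))
  have hGderiv : ∀ t, HasDerivAt G (g t * Real.sqrt (2 * F t)) t := by
    intro t
    exact ((hcont.integral_hasStrictDerivAt 0 t).hasDerivAt).add_const K
  have hGcont : Continuous G := by
    exact continuous_iff_continuousAt.2 fun t => (hGderiv t).continuousAt
  have hGpos : ∀ t ∈ Set.Icc (0:ℝ) S, 0 < G t := by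
    intro t ht
    have hint : (0:ℝ) ≤ ∫ s in (0:ℝ)..t, g s * Real.sqrt (2 * F s) := by
      apply intervalIntegral.integral_nonneg ht.1
      intro s hs
      have hs' : s ∈ Set.Icc (0:ℝ) S := ⟨hs.1, hs.2.trans ht.2⟩
      exact mul_nonneg (hgpos s hs') (Real.sqrt_nonneg _)
    simp only [hGdef]; linarith
  have hFG : ∀ t ∈ Set.Icc (0:ℝ) S, F t ≤ G t := fun t ht => hineq t ht
  intro t ht
  have htS : Set.Icc (0:ℝ) t ⊆ Set.Icc (0:ℝ) S := Set.Icc_subset_Icc le_rfl ht.2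
  -- derivative of sqrt ∘ G on [0,t]
  have hDderiv : ∀ s ∈ Set.uIcc (0:ℝ) t,
      HasDerivAt (fun u => Real.sqrt (G u))
        (1 / (2 * Real.sqrt (G s)) * (g s * Real.sqrt (2 * F s))) s := by
    intro s hs
    rw [Set.uIcc_of_le ht.1] at hs
    have hGs : G s ≠ 0 := ne_of_gt (hGpos s (htS hs))
    exact (Real.hasDerivAt_sqrt hGs).comp s (hGderiv s)
  have hDcont : ContinuousOn
      (fun s => 1 / (2 * Real.sqrt (G s)) * (g s * Real.sqrt (2 * F s)))
      (Set.uIcc (0:ℝ) t) := by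
    rw [Set.uIcc_of_le ht.1]
    apply ContinuousOn.mul _ hcont.continuousOn
    apply ContinuousOn.div continuousOn_const
    · exact (continuous_const.mul (Real.continuous_sqrt.comp hGcont)).continuousOn
    · intro s hs
      have := hGpos s (htS hs)
      positivity
  have hDint : IntervalIntegrable
      (fun s => 1 / (2 * Real.sqrt (G s)) * (g s * Real.sqrt (2 * F s))) MeasureTheory.volume 0 t :=
    hDcont.intervalIntegrable
  have hftc : (∫ s in (0:ℝ)..t, 1 / (2 * Real.sqrt (G s)) * (g s * Real.sqrt (2 * F s)))
      = Real.sqrt (G t) - Real.sqrt (G 0) :=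
    intervalIntegral.integral_eq_sub_of_hasDerivAt hDderiv hDint
  have hs2 : (0:ℝ) < Real.sqrt 2 := Real.sqrt_pos.2 (by norm_num)
  have hmono : (∫ s in (0:ℝ)..t, 1 / (2 * Real.sqrt (G s)) * (g s * Real.sqrt (2 * F s)))
      ≤ ∫ s in (0:ℝ)..t, g s / Real.sqrt 2 := by
    apply intervalIntegral.integral_mono_on ht.1 hDint
      ((hg.div_const _).intervalIntegrable 0 t)
    intro s hs
    have hs' : s ∈ Set.Icc (0:ℝ) S := htS hs
    have hGs := hGpos s hs'
    have hsqG : 0 < Real.sqrt (G s) := Real.sqrt_pos.2 hGs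
    have h2F : Real.sqrt (2 * F s) ≤ Real.sqrt 2 * Real.sqrt (G s) := by
      rw [← Real.sqrt_mul (by norm_num : (0:ℝ) ≤ 2)]
      exact Real.sqrt_le_sqrt (by nlinarith [hFG s hs'])
    have hgs := hgpos s hs'
    have h1 : 1 / (2 * Real.sqrt (G s)) * (g s * Real.sqrt (2 * F s))
        ≤ 1 / (2 * Real.sqrt (G s)) * (g s * (Real.sqrt 2 * Real.sqrt (G s))) := by
      apply mul_le_mul_of_nonneg_left (mul_le_mul_of_nonneg_left h2F hgs) (by positivity)
    refine h1.trans (le_of_eq ?_)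
    have h2 : Real.sqrt 2 * Real.sqrt 2 = 2 := Real.mul_self_sqrt (by norm_num)
    generalize hy : Real.sqrt (G s) = y at hsqG ⊢
    generalize hc : Real.sqrt 2 = c at h2 hs2 ⊢
    field_simp
    linear_combination g s * h2
  have hG0 : G 0 = K := by simp [hGdef]
  have hrhs : (∫ s in (0:ℝ)..t, g s / Real.sqrt 2)
      = (1 / Real.sqrt 2) * (∫ s in (0:ℝ)..t, g s) := by
    rw [intervalIntegral.integral_div]; ring
  have hsqrtF : Real.sqrt (F t) ≤ Real.sqrt (G t) := Real.sqrt_le_sqrt (hFG t ht)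
  calc Real.sqrt (F t) ≤ Real.sqrt (G t) := hsqrtF
    _ = (∫ s in (0:ℝ)..t, 1 / (2 * Real.sqrt (G s)) * (g s * Real.sqrt (2 * F s)))
        + Real.sqrt (G 0) := by rw [hftc]; ring
    _ ≤ (∫ s in (0:ℝ)..t, g s / Real.sqrt 2) + Real.sqrt K := by
        rw [hG0]; exact add_le_add_left hmono _
    _ = (1 / Real.sqrt 2) * (∫ s in (0:ℝ)..t, g s) + Real.sqrt K := by rw [hrhs]

theorem stmt_5 (S K : ℝ) (hS : 0 ≤ S) (hK : 0 ≤ K) (F g : ℝ → ℝ)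
    (hF : Continuous F) (hg : Continuous g)
    (hFpos : ∀ t ∈ Set.Icc (0:ℝ) S, 0 ≤ F t)
    (hgpos : ∀ t ∈ Set.Icc (0:ℝ) S, 0 ≤ g t)
    (hineq : ∀ t ∈ Set.Icc (0:ℝ) S,
      F t ≤ (∫ s in (0:ℝ)..t, g s * Real.sqrt (2 * F s)) + K) :
    ∀ t ∈ Set.Icc (0:ℝ) S,
      Real.sqrt (F t) ≤ (1 / Real.sqrt 2) * (∫ s in (0:ℝ)..t, g s) + Real.sqrt K := by
  intro t ht
  refine le_of_forall_pos_le_add fun ε hε => ?_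
  have hK' : 0 < K + ε ^ 2 := by positivity
  have hineq' : ∀ s ∈ Set.Icc (0:ℝ) S,
      F s ≤ (∫ u in (0:ℝ)..s, g u * Real.sqrt (2 * F u)) + (K + ε ^ 2) := by
    intro s hs; have := hineq s hs; nlinarith
  have h := key_5 S (K + ε ^ 2) hS hK' F g hF hg hFpos hgpos hineq' t ht
  have hsq : Real.sqrt (K + ε ^ 2) ≤ Real.sqrt K + ε := by
    rw [show Real.sqrt K + ε = Real.sqrt ((Real.sqrt K + ε) ^ 2) from
      (Real.sqrt_sq (by positivity)).symm]
    apply Real.sqrt_le_sqrt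
    nlinarith [Real.sq_sqrt hK, Real.sqrt_nonneg K]
  linarith
end

section
/- Let I : [0,L] × [0,∞) → ℝ be continuously differentiable with I(x,t) ≥ 0 everywhere, I(x,0) = 0 for all x, and suppose there is c > 0 such that |∂I/∂t(x,t)| + c ∂I/∂x(x,t) ≤ 0 for all (x,t) ∈ (0,L) × (0,∞). Then I(x,t) = 0 whenever x > c t. -/
theorem stmt_7 (L c : ℝ) (hL : 0 < L) (hc : 0 < c) (I : ℝ → ℝ → ℝ)
    (hsmooth : ContDiff ℝ 1 (fun p : ℝ × ℝ => I p.1 p.2))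
    (hpos : ∀ x ∈ Set.Icc (0:ℝ) L, ∀ t ≥ (0:ℝ), 0 ≤ I x t)
    (hinit : ∀ x ∈ Set.Icc (0:ℝ) L, I x 0 = 0)
    (hineq : ∀ x ∈ Set.Ioo (0:ℝ) L, ∀ t > (0:ℝ),
      |deriv (fun s => I x s) t| + c * deriv (fun y => I y t) x ≤ 0) :
    ∀ x ∈ Set.Icc (0:ℝ) L, ∀ t ≥ (0:ℝ), x > c * t → I x t = 0 := by
  intro x hx t ht hxt
  rcases eq_or_lt_of_le ht with rfl | htpos
  · exact hinit x hx
  set F : ℝ × ℝ → ℝ := fun p => I p.1 p.2 with hFdef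
  have hF : Differentiable ℝ F := hsmooth.differentiable one_ne_zero
  set x0 : ℝ := x - c * t with hx0def
  have hx0pos : 0 < x0 := by simp [hx0def]; linarith
  set h : ℝ → ℝ := fun s => I (x0 + c * s) s with hhdef
  have hγ : ∀ s : ℝ, HasDerivAt (fun s : ℝ => ((x0 + c * s, s) : ℝ × ℝ)) (c, 1) s := by
    intro s
    simpa using ((hasDerivAt_const s x0).add ((hasDerivAt_id s).const_mul c)).prodMk (hasDerivAt_id s)
  have hh : ∀ s : ℝ, HasDerivAt h (fderiv ℝ F (x0 + c * s, s) (c, 1)) s := by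
    intro s
    exact (hF.differentiableAt.hasFDerivAt).comp_hasDerivAt s (hγ s)
  have hhdiff : Differentiable ℝ h := fun s => (hh s).differentiableAt
  -- partial derivatives
  have hderX : ∀ x' t' : ℝ, deriv (fun y => I y t') x' = fderiv ℝ F (x', t') (1, 0) := by
    intro x' t'
    have : HasDerivAt (fun y => I y t') (fderiv ℝ F (x', t') (1, 0)) x' := by
      have hγ' : HasDerivAt (fun y : ℝ => ((y, t') : ℝ × ℝ)) ((1 : ℝ), (0 : ℝ)) x' :=
        (hasDerivAt_id x').prodMk (hasDerivAt_const x' t')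
      exact (hF.differentiableAt.hasFDerivAt).comp_hasDerivAt x' hγ'
    exact this.deriv
  have hderT : ∀ x' t' : ℝ, deriv (fun s => I x' s) t' = fderiv ℝ F (x', t') (0, 1) := by
    intro x' t'
    have : HasDerivAt (fun s => I x' s) (fderiv ℝ F (x', t') (0, 1)) t' := by
      have hγ' : HasDerivAt (fun s : ℝ => ((x', s) : ℝ × ℝ)) ((0 : ℝ), (1 : ℝ)) t' :=
        (hasDerivAt_const t' x').prodMk (hasDerivAt_id t')
      exact (hF.differentiableAt.hasFDerivAt).comp_hasDerivAt t' hγ'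
    exact this.deriv
  have hsplit : ∀ p : ℝ × ℝ, fderiv ℝ F p (c, 1)
      = c * fderiv ℝ F p (1, 0) + fderiv ℝ F p (0, 1) := by
    intro p
    have : ((c, 1) : ℝ × ℝ) = c • ((1 : ℝ), (0 : ℝ)) + ((0 : ℝ), (1 : ℝ)) := by
      simp [Prod.ext_iff]
    rw [this, map_add, map_smul]
    simp [smul_eq_mul]
  have hanti : AntitoneOn h (Set.Icc 0 t) := by
    apply antitoneOn_of_deriv_nonpos (convex_Icc 0 t) hhdiff.continuous.continuousOn
      (fun s _ => hhdiff s |>.differentiableWithinAt)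
    intro s hs
    rw [interior_Icc] at hs
    have hx' : x0 + c * s ∈ Set.Ioo (0 : ℝ) L := by
      constructor
      · nlinarith [hs.1]
      · have : x0 + c * s < x0 + c * t := by nlinarith [hs.2]
        have hxL : x ≤ L := hx.2
        simp only [hx0def] at this ⊢
        linarith
    have hkey := hineq _ hx' s hs.1
    rw [hderT, hderX] at hkey
    rw [(hh s).deriv, hsplit]
    have := abs_nonneg (fderiv ℝ F (x0 + c * s, s) (0, 1))
    have hle : fderiv ℝ F (x0 + c * s, s) (0, 1) ≤ |fderiv ℝ F (x0 + c * s, s) (0, 1)| :=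
      le_abs_self _
    linarith
  have hht : h t = I x t := by simp [hhdef, hx0def]
  have hh0 : h 0 = 0 := by
    have hx0mem : x0 ∈ Set.Icc (0 : ℝ) L := by
      constructor
      · linarith
      · have : c * t ≥ 0 := by positivity
        have := hx.2
        simp only [hx0def]; linarith
    simpa [hhdef] using hinit x0 hx0mem
  have hle : h t ≤ h 0 :=
    hanti (Set.left_mem_Icc.mpr ht) (Set.right_mem_Icc.mpr ht) ht
  have hge : 0 ≤ I x t := hpos x hx t ht
  rw [hht, hh0] at hle
  linarith
end
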